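/- If w, w' ∈ F(n) satisfy w' = w·c where c ∈ [A_i, A_i] for A_i the normal closure of a set {x_{i1},...,x_{il}} of generators, then for any monomial X_{j_1}⋯X_{j_k} in which each of the variables X_{i1},...,X_{il} occurs at most once in total among the j's, the coefficient of that monomial in the Magnus expansions of w and w' agree. -/

import Mathlib

/-- The ring `ℤ⟨⟨X_1,…,X_n⟩⟩` of formal power series in `n` non-commuting variables with
integer coefficients, realized as coefficient functions on words in the variables. -/
def NC (n : ℕ) : Type := List (Fin n) → ℤ

namespace NC

variable {n : ℕ}

instance : AddCommGroup (NC n) := Pi.addCommGroup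

instance : One (NC n) := ⟨fun w => if w = [] then 1 else 0⟩

/-- Convolution (Cauchy) product of non-commutative power series. -/
instance : Mul (NC n) :=
  ⟨fun f g w => ∑ k ∈ Finset.range (w.length + 1), f (w.take k) * g (w.drop k)⟩

theorem mul_apply (f g : NC n) (w : List (Fin n)) :
    (f * g) w = ∑ k ∈ Finset.range (w.length + 1), f (w.take k) * g (w.drop k) := rfl

theorem one_apply (w : List (Fin n)) : (1 : NC n) w = if w = [] then 1 else 0 := rfl

theorem zero_apply (w : List (Fin n)) : (0 : NC n) w = 0 := rfl

theorem add_apply (f g : NC n) (w : List (Fin n)) : (f + g) w = f w + g w := rfl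

protected theorem mul_assoc (f g h : NC n) : f * g * h = f * (g * h) := by
  funext w
  rw [mul_apply, mul_apply]
  calc
    ∑ j ∈ Finset.range (w.length + 1), (f * g) (w.take j) * h (w.drop j)
        = ∑ j ∈ Finset.range (w.length + 1), ∑ i ∈ Finset.range (j + 1),
            f (w.take i) * g ((w.drop i).take (j - i)) * h (w.drop j) := by
          refine Finset.sum_congr rfl ?_
          intro j hj
          simp only [Finset.mem_range] at hj
          rw [mul_apply, Finset.sum_mul]
          have hlen : (w.take j).length = j := by rw [List.length_take]; omega
          rw [hlen]
          refine Finset.sum_congr rfl ?_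
          intro i hi
          simp only [Finset.mem_range] at hi
          have h1 : (w.take j).take i = w.take i := by
            rw [List.take_take]; congr 1; omega
          have h2 : (w.take j).drop i = (w.drop i).take (j - i) := List.drop_take
          rw [h1, h2]
    _ = ∑ i ∈ Finset.range (w.length + 1), ∑ k ∈ Finset.range ((w.length - i) + 1),
            f (w.take i) * g ((w.drop i).take k) * h (w.drop (i + k)) := by
          rw [Finset.sum_sigma', Finset.sum_sigma']
          refine Finset.sum_nbij' (fun p => ⟨p.2, p.1 - p.2⟩) (fun q => ⟨q.1 + q.2, q.1⟩)
            ?_ ?_ ?_ ?_ ?_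
          · rintro ⟨j, i⟩ hp
            simp only [Finset.mem_sigma, Finset.mem_range] at hp ⊢
            omega
          · rintro ⟨i, k⟩ hq
            simp only [Finset.mem_sigma, Finset.mem_range] at hq ⊢
            omega
          · rintro ⟨j, i⟩ hp
            simp only [Finset.mem_sigma, Finset.mem_range] at hp
            have hji : i + (j - i) = j := by omega
            simp [hji]
          · rintro ⟨i, k⟩ hq
            simp only [Finset.mem_sigma, Finset.mem_range] at hq
            have hik : i + k - i = k := by omega
            simp [hik]
          · rintro ⟨j, i⟩ hp
            simp only [Finset.mem_sigma, Finset.mem_range] at hp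
            have : i + (j - i) = j := by omega
            rw [this]
    _ = ∑ i ∈ Finset.range (w.length + 1), f (w.take i) * (g * h) (w.drop i) := by
          refine Finset.sum_congr rfl ?_
          intro i hi
          simp only [Finset.mem_range] at hi
          rw [mul_apply, Finset.mul_sum]
          have hlen : (w.drop i).length = w.length - i := by rw [List.length_drop]
          rw [hlen]
          refine Finset.sum_congr rfl ?_
          intro k hk
          rw [List.drop_drop]
          ring_nf

protected theorem one_mul (f : NC n) : 1 * f = f := by
  funext w
  rw [mul_apply]
  rw [Finset.sum_eq_single 0]
  · simp [one_apply]
  · intro b hb hb0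
    rw [one_apply]
    rw [if_neg, zero_mul]
    intro hnil
    rcases List.take_eq_nil_iff.mp hnil with h | h
    · exact hb0 h
    · subst h; simp at hb; exact hb0 hb
  · intro h; simp at h

protected theorem mul_one (f : NC n) : f * 1 = f := by
  funext w
  rw [mul_apply]
  rw [Finset.sum_eq_single w.length]
  · simp [one_apply]
  · intro b hb hbne
    rw [one_apply, if_neg, mul_zero]
    intro hnil
    have := List.drop_eq_nil_iff.mp hnil
    simp at hb
    omega
  · intro h; simp at h

instance instRing : Ring (NC n) where
  __ := (inferInstance : AddCommGroup (NC n))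
  mul := (· * ·)
  one := 1
  mul_assoc := NC.mul_assoc
  one_mul := NC.one_mul
  mul_one := NC.mul_one
  left_distrib f g h := by
    funext w
    simp [mul_apply, add_apply, mul_add, Finset.sum_add_distrib]
  right_distrib f g h := by
    funext w
    simp [mul_apply, add_apply, add_mul, Finset.sum_add_distrib]
  zero_mul f := by
    funext w
    simp [mul_apply, zero_apply]
  mul_zero f := by
    funext w
    simp [mul_apply, zero_apply]

/-- The variable `X_i` as a power series. -/
def X (i : Fin n) : NC n := fun w => if w = [i] then 1 else 0

/-- The geometric series `1 - X_i + X_i² - X_i³ + ⋯`. -/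
def geom (i : Fin n) : NC n :=
  fun w => if ∀ j ∈ w, j = i then (-1) ^ w.length else 0

theorem val_inv (i : Fin n) : (1 + X i) * geom i = 1 := by
  funext w
  rw [mul_apply]
  cases w with
  | nil => simp [one_apply, add_apply, X, geom]
  | cons a t =>
    rw [one_apply, if_neg (by simp)]
    rw [Finset.sum_eq_add 0 1 (by omega)]
    · have h0 : ((a :: t).take 0) = ([] : List (Fin n)) := rfl
      have h1 : ((a :: t).take 1) = [a] := rfl
      rw [h0, h1]
      simp only [List.drop_zero, List.drop_one]
      by_cases hai : a = i
      · subst hai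
        simp only [add_apply, one_apply, X, geom]
        by_cases ht : ∀ j ∈ t, j = a
        · have hat : ∀ j ∈ (a :: t), j = a := fun j hj =>
            (List.mem_cons.mp hj).elim id (ht j)
          have ht' : ∀ j ∈ (a :: t).tail, j = a := ht
          simp only [if_pos hat, if_pos ht, if_pos ht']
          simp [pow_succ] <;> ring
        · have hat : ¬ ∀ j ∈ (a :: t), j = a := by simp [ht]
          simp [ht, hat]
      · simp only [add_apply, one_apply, X, geom]
        have h2 : ¬ ∀ j ∈ (a :: t), j = i := by
          intro hc; exact hai (hc a (by simp))
        have h3 : ¬ ([a] = [i]) := by simp [hai]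
        simp [h2, h3]
        exact fun hc => absurd hc hai
    · intro c hc ⟨hc0, hc1⟩
      simp only [Finset.mem_range, List.length_cons] at hc
      have : ((a :: t).take c) ≠ [] ∧ ((a :: t).take c) ≠ [i] := by
        constructor
        · simp [List.take_eq_nil_iff, hc0]
        · intro hcon
          have := congrArg List.length hcon
          simp [List.length_take] at this
          omega
      simp [add_apply, one_apply, X, this.1, this.2]
    · intro h; simp at h
    · intro h; simp at h

theorem inv_val (i : Fin n) : geom i * (1 + X i) = 1 := by
  funext w
  rw [mul_apply]
  rcases List.eq_nil_or_concat w with hw | ⟨t, a, hw⟩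
  · subst hw; simp [one_apply, add_apply, X, geom]
  · rw [List.concat_eq_append] at hw
    subst hw
    rw [one_apply, if_neg (by simp)]
    have hlen : (t ++ [a]).length = t.length + 1 := by simp
    rw [Finset.sum_eq_add t.length (t.length + 1) (by omega)]
    · have h1 : (t ++ [a]).take t.length = t := List.take_left
      have h2 : (t ++ [a]).drop t.length = [a] := List.drop_left
      have h3 : (t ++ [a]).take (t.length + 1) = t ++ [a] := by
        rw [List.take_of_length_le (by simp)]
      have h4 : (t ++ [a]).drop (t.length + 1) = [] := by
        rw [List.drop_of_length_le (by simp)]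
      rw [h1, h2, h3, h4]
      have e1 : ((1 : NC n) + X i) [a] = if a = i then 1 else 0 := by
        by_cases h : a = i <;> simp [add_apply, one_apply, X, h]
      have e2 : ((1 : NC n) + X i) [] = 1 := by
        simp [add_apply, one_apply, X]
      rw [e1, e2, mul_one]
      by_cases ha : a = i
      · rw [if_pos ha, mul_one]
        by_cases ht : ∀ j ∈ t, j = i
        · have hw' : ∀ j ∈ t ++ [a], j = i := by
            intro j hj
            rcases List.mem_append.mp hj with h | h
            · exact ht j h
            · simp only [List.mem_singleton] at h
              rw [h, ha]
          simp only [geom, if_pos ht, if_pos hw', hlen, pow_succ]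
          ring
        · have hw' : ¬ ∀ j ∈ t ++ [a], j = i :=
            fun hc => ht fun j hj => hc j (List.mem_append_left _ hj)
          simp only [geom, if_neg ht, if_neg hw']
          ring
      · rw [if_neg ha, mul_zero, zero_add]
        have hw' : ¬ ∀ j ∈ t ++ [a], j = i :=
          fun hc => ha (hc a (List.mem_append_right t (by simp)))
        simp only [geom, if_neg hw']
    · intro c hc ⟨hc0, hc1⟩
      simp only [Finset.mem_range, hlen] at hc
      have hne : ((t ++ [a]).drop c) ≠ [] ∧ ((t ++ [a]).drop c) ≠ [i] := by
        constructor
        · intro hcon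
          have := congrArg List.length hcon
          simp at this
          omega
        · intro hcon
          have := congrArg List.length hcon
          simp at this
          omega
      simp [add_apply, one_apply, X, hne.1, hne.2]
    · intro h
      exact absurd (by simp only [Finset.mem_range, hlen]; omega) h
    · intro h
      exact absurd (by simp only [Finset.mem_range, hlen]; omega) h

/-- `1 + X_i` as a unit of `ℤ⟨⟨X_1,…,X_n⟩⟩`, with inverse `1 - X_i + X_i² - ⋯`. -/
def magnusUnit (i : Fin n) : (NC n)ˣ where
  val := 1 + X i
  inv := geom i
  val_inv := val_inv i
  inv_val := inv_val i

end NC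

/-- The Magnus expansion `F(n) → ℤ⟨⟨X_1,…,X_n⟩⟩ˣ`, `x_i ↦ 1 + X_i`. -/
def magnus (n : ℕ) : FreeGroup (Fin n) →* (NC n)ˣ := FreeGroup.lift NC.magnusUnit

/-- The coefficient of the monomial `X_{u 0} ⋯ X_{u k}` in the Magnus expansion of `w`. -/
def magnusCoeff {n : ℕ} (w : FreeGroup (Fin n)) (u : List (Fin n)) : ℤ :=
  ((magnus n w : (NC n)ˣ) : NC n) u

namespace NC

variable {n : ℕ}

theorem psub_apply (f g : NC n) (v : List (Fin n)) : (f - g) v = f v - g v := rfl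
theorem pneg_apply (f : NC n) (v : List (Fin n)) : (-f) v = -(f v) := rfl

/-- Series whose coefficients vanish on words with no letter in `S`. -/
def I1 (S : Finset (Fin n)) (f : NC n) : Prop :=
  ∀ v : List (Fin n), v.countP (fun j => decide (j ∈ S)) = 0 → f v = 0

/-- Series whose coefficients vanish on words with at most one letter in `S`. -/
def I2 (S : Finset (Fin n)) (f : NC n) : Prop :=
  ∀ v : List (Fin n), v.countP (fun j => decide (j ∈ S)) ≤ 1 → f v = 0

theorem countP_take_add_drop (S : Finset (Fin n)) (v : List (Fin n)) (k : ℕ) :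
    (v.take k).countP (fun j => decide (j ∈ S)) + (v.drop k).countP (fun j => decide (j ∈ S))
      = v.countP (fun j => decide (j ∈ S)) := by
  rw [← List.countP_append, List.take_append_drop]

theorem I1.add {S : Finset (Fin n)} {f g : NC n} (hf : I1 S f) (hg : I1 S g) :
    I1 S (f + g) := fun v hv => by
  rw [add_apply, hf v hv, hg v hv, add_zero]

theorem I1.neg {S : Finset (Fin n)} {f : NC n} (hf : I1 S f) : I1 S (-f) := fun v hv => by
  rw [pneg_apply, hf v hv, neg_zero]

theorem I1.mul_left {S : Finset (Fin n)} (f : NC n) {g : NC n} (hg : I1 S g) :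
    I1 S (f * g) := fun v hv => by
  rw [mul_apply]
  refine Finset.sum_eq_zero fun k _ => ?_
  rw [hg _ (by have := countP_take_add_drop S v k; omega), mul_zero]

theorem I1.mul_right {S : Finset (Fin n)} {f : NC n} (hf : I1 S f) (g : NC n) :
    I1 S (f * g) := fun v hv => by
  rw [mul_apply]
  refine Finset.sum_eq_zero fun k _ => ?_
  rw [hf _ (by have := countP_take_add_drop S v k; omega), zero_mul]

theorem I1.mul_I2 {S : Finset (Fin n)} {f g : NC n} (hf : I1 S f) (hg : I1 S g) :
    I2 S (f * g) := fun v hv => by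
  rw [mul_apply]
  refine Finset.sum_eq_zero fun k _ => ?_
  have h := countP_take_add_drop S v k
  by_cases h0 : (v.take k).countP (fun j => decide (j ∈ S)) = 0
  · rw [hf _ h0, zero_mul]
  · rw [hg _ (by omega), mul_zero]

theorem I2.add {S : Finset (Fin n)} {f g : NC n} (hf : I2 S f) (hg : I2 S g) :
    I2 S (f + g) := fun v hv => by
  rw [add_apply, hf v hv, hg v hv, add_zero]

theorem I2.neg {S : Finset (Fin n)} {f : NC n} (hf : I2 S f) : I2 S (-f) := fun v hv => by
  rw [pneg_apply, hf v hv, neg_zero]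

theorem I2.sub {S : Finset (Fin n)} {f g : NC n} (hf : I2 S f) (hg : I2 S g) :
    I2 S (f - g) := fun v hv => by
  rw [psub_apply, hf v hv, hg v hv, sub_zero]

theorem I2.mul_left {S : Finset (Fin n)} (f : NC n) {g : NC n} (hg : I2 S g) :
    I2 S (f * g) := fun v hv => by
  rw [mul_apply]
  refine Finset.sum_eq_zero fun k _ => ?_
  rw [hg _ (by have := countP_take_add_drop S v k; omega), mul_zero]

theorem I2.mul_right {S : Finset (Fin n)} {f : NC n} (hf : I2 S f) (g : NC n) :
    I2 S (f * g) := fun v hv => by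
  rw [mul_apply]
  refine Finset.sum_eq_zero fun k _ => ?_
  rw [hf _ (by have := countP_take_add_drop S v k; omega), zero_mul]

end NC

/-- The subgroup of elements whose Magnus expansion is `1 + (S`-degree `≥ 1)`. -/
def magnusDeg1 (n : ℕ) (S : Finset (Fin n)) : Subgroup (FreeGroup (Fin n)) where
  carrier := {g | NC.I1 S (((magnus n g : (NC n)ˣ) : NC n) - 1)}
  one_mem' := by
    simp only [Set.mem_setOf_eq, map_one, Units.val_one, sub_self]
    intro v _; rfl
  mul_mem' := by
    intro a b ha hb
    simp only [Set.mem_setOf_eq, map_mul, Units.val_mul] at *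
    set A : NC n := ((magnus n a : (NC n)ˣ) : NC n)
    set B : NC n := ((magnus n b : (NC n)ˣ) : NC n)
    have key : A * B - 1 = (A - 1) * (B - 1) + (A - 1) + (B - 1) := by noncomm_ring
    rw [key]
    exact ((ha.mul_right (B - 1)).add ha).add hb
  inv_mem' := by
    intro a ha
    simp only [Set.mem_setOf_eq, map_inv] at *
    have h1 : ((magnus n a)⁻¹ : (NC n)ˣ).val * ((magnus n a : (NC n)ˣ) : NC n) = 1 := by
      rw [← Units.val_mul, inv_mul_cancel, Units.val_one]
    have key : (((magnus n a)⁻¹ : (NC n)ˣ) : NC n) - 1 =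
        -(((magnus n a)⁻¹ : (NC n)ˣ).val * (((magnus n a : (NC n)ˣ) : NC n) - 1)) := by
      rw [mul_sub, h1, mul_one, neg_sub]
    rw [key]
    exact (NC.I1.mul_left _ ha).neg

instance magnusDeg1_normal (n : ℕ) (S : Finset (Fin n)) : (magnusDeg1 n S).Normal := by
  constructor
  intro a ha g
  simp only [magnusDeg1, Subgroup.mem_mk, Set.mem_setOf_eq, map_mul, map_inv,
    Units.val_mul] at *
  show NC.I1 S (((magnus n (g * a * g⁻¹) : (NC n)ˣ) : NC n) - 1)
  simp only [map_mul, map_inv, Units.val_mul]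
  set G := magnus n g
  set A := magnus n a
  have h1 : (G : NC n) * ((G⁻¹ : (NC n)ˣ) : NC n) = 1 := by
    rw [← Units.val_mul, mul_inv_cancel, Units.val_one]
  have key : (G : NC n) * (A : NC n) * ((G⁻¹ : (NC n)ˣ) : NC n) - 1 =
      (G : NC n) * ((A : NC n) - 1) * ((G⁻¹ : (NC n)ˣ) : NC n) := by
    have : (G : NC n) * ((A : NC n) - 1) * ((G⁻¹ : (NC n)ˣ) : NC n) =
        (G : NC n) * (A : NC n) * ((G⁻¹ : (NC n)ˣ) : NC n) -
          (G : NC n) * ((G⁻¹ : (NC n)ˣ) : NC n) := by noncomm_ring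
    rw [this, h1]
  rw [key]
  exact (NC.I1.mul_left _ ha).mul_right _

/-- The subgroup of elements whose Magnus expansion is `1 + (S`-degree `≥ 2)`. -/
def magnusDeg2 (n : ℕ) (S : Finset (Fin n)) : Subgroup (FreeGroup (Fin n)) where
  carrier := {g | NC.I2 S (((magnus n g : (NC n)ˣ) : NC n) - 1)}
  one_mem' := by
    simp only [Set.mem_setOf_eq, map_one, Units.val_one, sub_self]
    intro v _; rfl
  mul_mem' := by
    intro a b ha hb
    simp only [Set.mem_setOf_eq, map_mul, Units.val_mul] at *
    set A : NC n := ((magnus n a : (NC n)ˣ) : NC n)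
    set B : NC n := ((magnus n b : (NC n)ˣ) : NC n)
    have key : A * B - 1 = (A - 1) * (B - 1) + (A - 1) + (B - 1) := by noncomm_ring
    rw [key]
    exact ((ha.mul_right (B - 1)).add ha).add hb
  inv_mem' := by
    intro a ha
    simp only [Set.mem_setOf_eq, map_inv] at *
    have h1 : ((magnus n a)⁻¹ : (NC n)ˣ).val * ((magnus n a : (NC n)ˣ) : NC n) = 1 := by
      rw [← Units.val_mul, inv_mul_cancel, Units.val_one]
    have key : (((magnus n a)⁻¹ : (NC n)ˣ) : NC n) - 1 =
        -(((magnus n a)⁻¹ : (NC n)ˣ).val * (((magnus n a : (NC n)ˣ) : NC n) - 1)) := by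
      rw [mul_sub, h1, mul_one, neg_sub]
    rw [key]
    exact (NC.I2.mul_left _ ha).neg

theorem normalClosure_le_magnusDeg1 (n : ℕ) (S : Finset (Fin n)) :
    Subgroup.normalClosure (FreeGroup.of '' (S : Set (Fin n))) ≤ magnusDeg1 n S := by
  apply Subgroup.normalClosure_le_normal
  rintro - ⟨s, hs, rfl⟩
  show NC.I1 S (((magnus n (FreeGroup.of s) : (NC n)ˣ) : NC n) - 1)
  have : magnus n (FreeGroup.of s) = NC.magnusUnit s := FreeGroup.lift_apply_of
  rw [this]
  intro v hv
  show ((1 : NC n) + NC.X s) v - (1 : NC n) v = 0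
  rw [NC.add_apply, add_sub_cancel_left]
  unfold NC.X
  rw [if_neg]
  intro hveq
  rw [hveq] at hv
  simp [List.countP_cons] at hv
  exact absurd hs (by simpa using hv)

open scoped commutatorElement in
theorem commutator_mem_magnusDeg2 (n : ℕ) (S : Finset (Fin n)) (a b : FreeGroup (Fin n))
    (ha : a ∈ magnusDeg1 n S) (hb : b ∈ magnusDeg1 n S) : ⁅a, b⁆ ∈ magnusDeg2 n S := by
  have ha' : NC.I1 S (((magnus n a : (NC n)ˣ) : NC n) - 1) := ha
  have hb' : NC.I1 S (((magnus n b : (NC n)ˣ) : NC n) - 1) := hb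
  show NC.I2 S (((magnus n ⁅a, b⁆ : (NC n)ˣ) : NC n) - 1)
  rw [commutatorElement_def]
  simp only [map_mul, map_inv, Units.val_mul]
  set A := magnus n a
  set B := magnus n b
  have hA : (A : NC n) * ((A⁻¹ : (NC n)ˣ) : NC n) = 1 := by
    rw [← Units.val_mul, mul_inv_cancel, Units.val_one]
  have hB : (B : NC n) * ((B⁻¹ : (NC n)ˣ) : NC n) = 1 := by
    rw [← Units.val_mul, mul_inv_cancel, Units.val_one]
  have key : (A : NC n) * (B : NC n) * ((A⁻¹ : (NC n)ˣ) : NC n) * ((B⁻¹ : (NC n)ˣ) : NC n)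
      - 1 = ((A : NC n) * (B : NC n) - (B : NC n) * (A : NC n)) *
        ((A⁻¹ : (NC n)ˣ) : NC n) * ((B⁻¹ : (NC n)ˣ) : NC n) := by
    have expand : ((A : NC n) * (B : NC n) - (B : NC n) * (A : NC n)) *
        ((A⁻¹ : (NC n)ˣ) : NC n) * ((B⁻¹ : (NC n)ˣ) : NC n) =
        (A : NC n) * (B : NC n) * ((A⁻¹ : (NC n)ˣ) : NC n) * ((B⁻¹ : (NC n)ˣ) : NC n) -
        (B : NC n) * ((A : NC n) * ((A⁻¹ : (NC n)ˣ) : NC n)) * ((B⁻¹ : (NC n)ˣ) : NC n) := by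
      noncomm_ring
    rw [expand, hA, mul_one, hB]
  rw [key]
  have comm : (A : NC n) * (B : NC n) - (B : NC n) * (A : NC n) =
      ((A : NC n) - 1) * ((B : NC n) - 1) - ((B : NC n) - 1) * ((A : NC n) - 1) := by
    noncomm_ring
  rw [comm]
  exact (((ha'.mul_I2 hb').sub (hb'.mul_I2 ha')).mul_right _).mul_right _

/-- If `w' = w·c` with `c ∈ [A,A]`, where `A` is the normal closure of the generators
`{x_s : s ∈ S}`, then for any monomial `X_{j_1}⋯X_{j_k}` in which the variables `X_s`
(`s ∈ S`) occur at most once in total, the coefficients of that monomial in the Magnus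
expansions of `w` and `w'` agree. -/
theorem magnusCoeff_mul_commutator (n : ℕ) (S : Finset (Fin n))
    (w w' c : FreeGroup (Fin n))
    (hc : c ∈ ⁅Subgroup.normalClosure (FreeGroup.of '' (S : Set (Fin n))),
               Subgroup.normalClosure (FreeGroup.of '' (S : Set (Fin n)))⁆)
    (hw' : w' = w * c)
    (u : List (Fin n)) (hu : u.countP (fun j => decide (j ∈ S)) ≤ 1) :
    magnusCoeff w' u = magnusCoeff w u := by
  subst hw'
  have hc2 : c ∈ magnusDeg2 n S := by
    refine Subgroup.commutator_le.mpr ?_ hc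
    intro g1 hg1 g2 hg2
    exact commutator_mem_magnusDeg2 n S g1 g2
      (normalClosure_le_magnusDeg1 n S hg1) (normalClosure_le_magnusDeg1 n S hg2)
  have hc2' : NC.I2 S (((magnus n c : (NC n)ˣ) : NC n) - 1) := hc2
  have key : magnusCoeff (w * c) u - magnusCoeff w u =
      (((magnus n w : (NC n)ˣ) : NC n) * (((magnus n c : (NC n)ˣ) : NC n) - 1)) u := by
    unfold magnusCoeff
    rw [map_mul, Units.val_mul, mul_sub, mul_one, NC.psub_apply]
  have hz := (NC.I2.mul_left ((magnus n w : (NC n)ˣ) : NC n) hc2') u hu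
  omega
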